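/- (Proposition 2, logistic case: derivative of the ℓ1-penalized logistic regression solution with respect to the regularization parameter.) Let I ⊆ (0,∞) be an open interval, s ∈ {−1,1}^p a fixed sign vector, and β̂ : I → ℝ^p a differentiable map such that for every λ ∈ I: sign(β̂(λ)_j) = s_j for all j, and the stationarity identity Σ_{i=1}^t w_i (y_i − σ(X_iᵀβ̂(λ)))·X_i = λ·s holds in ℝ^p. Suppose moreover that for each λ ∈ I the matrix M(λ) = Σ_{i=1}^t w_i · σ(X_iᵀβ̂(λ))·(1 − σ(X_iᵀβ̂(λ)))·X_i X_iᵀ ∈ ℝ^{p×p} is invertible. Then for every λ ∈ I the derivative satisfies dβ̂/dλ = −M(λ)⁻¹ s. -/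

import Mathlib

open Matrix BigOperators

/-- The logistic function `σ(u) = 1/(1 + e^{−u})`. -/
noncomputable def logistic (u : ℝ) : ℝ := 1 / (1 + Real.exp (-u))

/-- The weighted Fisher-information-type matrix
`M(λ) = Σ_i w_i σ(X_iᵀβ̂(λ))(1 − σ(X_iᵀβ̂(λ))) X_i X_iᵀ`. -/
noncomputable def logisticInfo {p t : ℕ} (X : Matrix (Fin t) (Fin p) ℝ)
    (w : Fin t → ℝ) (β : Fin p → ℝ) : Matrix (Fin p) (Fin p) ℝ :=
  Matrix.of fun j k =>
    ∑ i, w i * logistic (X i ⬝ᵥ β) * (1 - logistic (X i ⬝ᵥ β)) * X i j * X i k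

lemma logistic_hasDerivAt (u : ℝ) :
    HasDerivAt logistic (logistic u * (1 - logistic u)) u := by
  have hpos : (0:ℝ) < 1 + Real.exp (-u) := by positivity
  have h0 : HasDerivAt (fun v : ℝ => -v) (-1 : ℝ) u := (hasDerivAt_id u).neg
  have h1 : HasDerivAt (fun v : ℝ => 1 + Real.exp (-v)) (-Real.exp (-u)) u := by
    have := ((Real.hasDerivAt_exp (-u)).comp u h0).const_add 1
    simpa using this
  have h2 := h1.fun_inv (ne_of_gt hpos)
  have h3 : HasDerivAt logistic (Real.exp (-u) / (1 + Real.exp (-u))^2) u := by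
    unfold logistic
    simpa [one_div] using h2
  convert h3 using 1
  have hne := ne_of_gt hpos
  unfold logistic
  field_simp
  ring

/-- Proposition 2 (logistic case): if on an open interval `I = (a,b) ⊆ (0,∞)`
the differentiable solution path `β̂(λ)` has constant sign vector `s` and
satisfies the stationarity identity
`Σ_i w_i (y_i − σ(X_iᵀβ̂(λ)))·X_i = λ·s`, and `M(λ)` is invertible, then
`dβ̂/dλ = −M(λ)⁻¹ s`. -/
theorem logistic_lasso_path_derivative
    {p t : ℕ} (X : Matrix (Fin t) (Fin p) ℝ) (y w : Fin t → ℝ)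
    (hy : ∀ i, y i = 0 ∨ y i = 1) (hw : ∀ i, 0 < w i)
    (a b : ℝ) (ha : 0 ≤ a)
    (s : Fin p → ℝ) (hs : ∀ j, s j = -1 ∨ s j = 1)
    (βhat : ℝ → Fin p → ℝ)
    (hdiff : ∀ lam ∈ Set.Ioo a b, DifferentiableAt ℝ βhat lam)
    (hsgn : ∀ lam ∈ Set.Ioo a b, ∀ j, Real.sign (βhat lam j) = s j)
    (hstat : ∀ lam ∈ Set.Ioo a b, ∀ j,
      ∑ i, w i * (y i - logistic (X i ⬝ᵥ βhat lam)) * X i j = lam * s j)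
    (hM : ∀ lam ∈ Set.Ioo a b, IsUnit (logisticInfo X w (βhat lam)).det) :
    ∀ lam ∈ Set.Ioo a b,
      deriv βhat lam = -((logisticInfo X w (βhat lam))⁻¹.mulVec s) := by
  intro lam hlam
  set d := deriv βhat lam with hd
  have hβ : HasDerivAt βhat d lam := (hdiff lam hlam).hasDerivAt
  have hdot : ∀ i, HasDerivAt (fun l => X i ⬝ᵥ βhat l) (X i ⬝ᵥ d) lam := by
    intro i
    have h : HasDerivAt (fun l => ∑ k, X i k * βhat l k) (∑ k, X i k * d k) lam := by
      apply HasDerivAt.fun_sum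
      intro k _
      have hk : HasDerivAt (fun l => βhat l k) (d k) lam :=
        (ContinuousLinearMap.proj k (R := ℝ) (φ := fun _ : Fin p => ℝ)).hasFDerivAt.comp_hasDerivAt lam hβ
      exact hk.const_mul (X i k)
    simpa [dotProduct] using h
  have key : ∀ j, (logisticInfo X w (βhat lam)).mulVec d j = - s j := by
    intro j
    have hg : HasDerivAt (fun l => ∑ i, w i * (y i - logistic (X i ⬝ᵥ βhat l)) * X i j)
        (∑ i, w i * (-(logistic (X i ⬝ᵥ βhat lam) * (1 - logistic (X i ⬝ᵥ βhat lam)) * (X i ⬝ᵥ d))) * X i j) lam := by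
      apply HasDerivAt.fun_sum
      intro i _
      have h1 : HasDerivAt (fun l => logistic (X i ⬝ᵥ βhat l))
          (logistic (X i ⬝ᵥ βhat lam) * (1 - logistic (X i ⬝ᵥ βhat lam)) * (X i ⬝ᵥ d)) lam :=
        (logistic_hasDerivAt _).comp lam (hdot i)
      have h2 := ((h1.const_sub (y i)).const_mul (w i)).mul_const (X i j)
      convert h2 using 1
    have heq : (fun l => ∑ i, w i * (y i - logistic (X i ⬝ᵥ βhat l)) * X i j)
        =ᶠ[nhds lam] (fun l => l * s j) := by
      filter_upwards [isOpen_Ioo.mem_nhds hlam] with l hl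
      exact hstat l hl j
    have hderiv_g : (∑ i, w i * (-(logistic (X i ⬝ᵥ βhat lam) * (1 - logistic (X i ⬝ᵥ βhat lam)) * (X i ⬝ᵥ d))) * X i j) = s j := by
      rw [← hg.deriv, heq.deriv_eq]
      simp
    have hMv : (logisticInfo X w (βhat lam)).mulVec d j
        = ∑ i, w i * logistic (X i ⬝ᵥ βhat lam) * (1 - logistic (X i ⬝ᵥ βhat lam)) * X i j * (X i ⬝ᵥ d) := by
      simp only [logisticInfo, Matrix.mulVec, dotProduct, Matrix.of_apply, Finset.sum_mul]
      rw [Finset.sum_comm]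
      refine Finset.sum_congr rfl fun i _ => ?_
      rw [Finset.mul_sum]
      refine Finset.sum_congr rfl fun k _ => ?_
      ring
    rw [hMv, ← hderiv_g, ← Finset.sum_neg_distrib]
    refine Finset.sum_congr rfl fun i _ => ?_
    ring
  have hMd : (logisticInfo X w (βhat lam)).mulVec d = -s := funext key
  have hinv := Matrix.nonsing_inv_mul _ (hM lam hlam)
  calc d = (1 : Matrix (Fin p) (Fin p) ℝ).mulVec d := (Matrix.one_mulVec d).symm
    _ = ((logisticInfo X w (βhat lam))⁻¹ * logisticInfo X w (βhat lam)).mulVec d := by rw [hinv]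
    _ = (logisticInfo X w (βhat lam))⁻¹.mulVec ((logisticInfo X w (βhat lam)).mulVec d) := by
        rw [Matrix.mulVec_mulVec]
    _ = (logisticInfo X w (βhat lam))⁻¹.mulVec (-s) := by rw [hMd]
    _ = -((logisticInfo X w (βhat lam))⁻¹.mulVec s) := by rw [Matrix.mulVec_neg]
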